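/- Let κ be a regular uncountable cardinal and λ a cardinal, and let X = K_{λ,λ} be the complete bipartite graph with both parts of size λ. If λ < r_κ (the κ-reaping number), then the restricted list colorability RList(X, κ) holds: every list function L : V → [κ]^κ admits a good choice function. -/
import Mathlib


open Cardinal Set

/-- The family of subsets of κ of cardinality κ. -/
def kappaSets (κ : Cardinal.{0}) : Set (Set Ordinal) :=
  {A | A ⊆ Set.Iio κ.ord ∧ #A = Cardinal.lift.{1} κ}

/-- A κ-splits B: both B ∩ A and B \ A have cardinality κ. -/
def kSplits (κ : Cardinal.{0}) (A B : Set Ordinal) : Prop :=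
  #(B ∩ A : Set Ordinal) = Cardinal.lift.{1} κ ∧
  #(B \ A : Set Ordinal) = Cardinal.lift.{1} κ

/-- R is a κ-reaping family. -/
def IsReaping (κ : Cardinal.{0}) (R : Set (Set Ordinal)) : Prop :=
  R ⊆ kappaSets κ ∧ ∀ A ∈ kappaSets κ, ∃ B ∈ R, ¬ kSplits κ A B

/-- The κ-reaping number r_κ. -/
noncomputable def reapingNumber (κ : Cardinal.{0}) : Cardinal.{1} :=
  sInf {c | ∃ R : Set (Set Ordinal), IsReaping κ R ∧ #R = c}

lemma exists_injOn_choice {ι α : Type*} [DecidableEq ι] [DecidableEq α]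
    (S : ι → Set α) (hS : ∀ i, (S i).Infinite) (s : Finset ι) :
    ∃ f : ι → α, (∀ i ∈ s, f i ∈ S i) ∧ Set.InjOn f s := by
  classical
  induction s using Finset.induction with
  | empty => exact ⟨fun i => (hS i).nonempty.some, by simp, by simp [Set.InjOn]⟩
  | @insert a s ha ih =>
    obtain ⟨f, hf, hinj⟩ := ih
    obtain ⟨x, hxS, hxim⟩ := ((hS a).diff (s.image f).finite_toSet).nonempty
    have key : ∀ i ∈ s, Function.update f a x i = f i := by
      intro i hi
      have hia : i ≠ a := by rintro rfl; exact ha hi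
      exact Function.update_of_ne hia _ _
    refine ⟨Function.update f a x, ?_, ?_⟩
    · intro i hi
      rcases Finset.mem_insert.mp hi with h | hi
      · subst h; simpa using hxS
      · rw [key i hi]; exact hf i hi
    · intro i hi j hj hij
      simp only [Finset.coe_insert, Set.mem_insert_iff, Finset.mem_coe] at hi hj
      rcases hi with rfl | hi <;> rcases hj with rfl | hj
      · rfl
      · exfalso
        rw [Function.update_self, key j hj] at hij
        exact hxim (Finset.mem_image.mpr ⟨j, hj, hij.symm⟩)
      · exfalso
        rw [Function.update_self, key i hi] at hij
        exact hxim (Finset.mem_image.mpr ⟨i, hi, hij⟩)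
      · rw [key i hi, key j hj] at hij
        exact hinj hi hj hij

/-- if λ < r_κ, then RList(K_{λ,λ}, κ) holds. -/
theorem rlist_of_lt_reaping {A B : Type} (κ lam : Cardinal.{0})
    (hreg : κ.IsRegular) (hunc : ℵ₀ < κ)
    (hA : #A = lam) (hB : #B = lam)
    (hlt : Cardinal.lift.{1} lam < reapingNumber κ)
    (L : A ⊕ B → Set Ordinal) (hL : ∀ v, L v ∈ kappaSets κ) :
    ∃ c : A ⊕ B → Ordinal, (∀ v, c v ∈ L v) ∧
      ∀ v w, (completeBipartiteGraph A B).Adj v w → c v ≠ c w := by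
  classical
  rcases lt_or_ge lam ℵ₀ with hfin | hinf
  · -- finite case
    have hAfin : Finite A := Cardinal.lt_aleph0_iff_finite.mp (hA ▸ hfin)
    have hBfin : Finite B := Cardinal.lt_aleph0_iff_finite.mp (hB ▸ hfin)
    have := Fintype.ofFinite (A ⊕ B)
    have hLinf : ∀ v, (L v).Infinite := by
      intro v
      rw [← Set.infinite_coe_iff, Cardinal.infinite_iff, (hL v).2]
      exact le_of_lt (by simpa using Cardinal.lift_lt.{0,1}.mpr hunc)
    obtain ⟨f, hf, hinj⟩ := exists_injOn_choice L hLinf Finset.univ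
    refine ⟨f, fun v => hf v (Finset.mem_univ v), fun v w hadj hvw => ?_⟩
    exact (completeBipartiteGraph A B).ne_of_adj hadj
      (hinj (Finset.mem_coe.mpr (Finset.mem_univ v)) (Finset.mem_coe.mpr (Finset.mem_univ w)) hvw)
  · -- infinite case
    have hsub : Set.range L ⊆ kappaSets κ := by rintro _ ⟨v, rfl⟩; exact hL v
    have hcard : #(Set.range L) < reapingNumber κ := by
      refine lt_of_le_of_lt ?_ hlt
      have h1 : #(Set.range L) ≤ Cardinal.lift.{1} #(A ⊕ B) := by
        simpa using Cardinal.mk_range_le_lift (f := L)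
      have h2 : #(A ⊕ B) = lam := by
        simp only [Cardinal.mk_sum, hA, hB, Cardinal.lift_id]
        exact Cardinal.add_eq_self hinf
      rwa [h2] at h1
    have hnr : ¬ IsReaping κ (Set.range L) := fun hR =>
      absurd (csInf_le' ⟨_, hR, rfl⟩ : reapingNumber κ ≤ #(Set.range L))
        (not_le.mpr hcard)
    obtain ⟨S, hSmem, hSsplit⟩ : ∃ S ∈ kappaSets κ, ∀ C ∈ Set.range L, kSplits κ S C := by
      by_contra h; push_neg at h
      exact hnr ⟨hsub, h⟩
    have hκ0 : Cardinal.lift.{1} κ ≠ 0 := by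
      simpa [Cardinal.lift_eq_zero] using (Cardinal.aleph0_pos.trans hunc).ne'
    have hmeet : ∀ v, (L v ∩ S).Nonempty ∧ (L v \ S).Nonempty := by
      intro v
      obtain ⟨h1, h2⟩ := hSsplit (L v) ⟨v, rfl⟩
      exact ⟨Set.nonempty_coe_sort.mp (Cardinal.mk_ne_zero_iff.mp (h1 ▸ hκ0)),
        Set.nonempty_coe_sort.mp (Cardinal.mk_ne_zero_iff.mp (h2 ▸ hκ0))⟩
    refine ⟨Sum.elim (fun a => ((hmeet (Sum.inl a)).1).some)
        (fun b => ((hmeet (Sum.inr b)).2).some), ?_, ?_⟩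
    · rintro (a | b)
      · exact ((hmeet (Sum.inl a)).1).some_mem.1
      · exact ((hmeet (Sum.inr b)).2).some_mem.1
    · rintro (a | a) (b | b) hadj <;> simp [completeBipartiteGraph] at hadj <;>
        simp only [Sum.elim_inl, Sum.elim_inr] <;> intro heq
      · exact ((hmeet (Sum.inr b)).2).some_mem.2 (heq ▸ ((hmeet (Sum.inl a)).1).some_mem.2)
      · exact ((hmeet (Sum.inr a)).2).some_mem.2 (heq ▸ ((hmeet (Sum.inl b)).1).some_mem.2)
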